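/- Let p be a positive integer and let r_p be the maximal root in (0,1) of 8 r^{2p} + r^{2(p−1)} − 6 r^{p−1} + 1 = 0. Let f(z) = ∑_{k≥0} a_{pk+1} z^{pk+1} be a p-symmetric analytic function in 𝔻 with |f(z)| ≤ 1 in 𝔻, and write a = |a_1|. If a < r_p^p, then ∑_{k≥0} |a_{pk+1}| r_p^{pk+1} ≤ r_p ( a + r_p^p √(1 − a²)/√(1 − r_p^{2p}) ) ≤ 2 r_p^{p+1} ≤ 1. -/

import Mathlib

open MeasureTheory Filter Set Topology AddCircle
open scoped ENNReal NNReal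

lemma aux_parseval (p : ℕ) (hp : 0 < p) (f : ℂ → ℂ) (a : ℕ → ℂ)
    (hf : ∀ z ∈ Metric.ball (0 : ℂ) 1, HasSum (fun k : ℕ => a k * z ^ (p * k + 1)) (f z))
    (hb : ∀ z ∈ Metric.ball (0 : ℂ) 1, ‖f z‖ ≤ 1)
    (s : ℝ) (hs0 : 0 < s) (hs1 : s < 1) (N : ℕ) :
    ∑ k ∈ Finset.range N, (‖a k‖ * s ^ (p * k + 1)) ^ 2 ≤ 1 := by
  haveI : Fact (0 < (1:ℝ)) := ⟨one_pos⟩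
  set s' : ℝ := (1 + s) / 2 with hs'def
  have hss' : s < s' := by rw [hs'def]; linarith
  have hs'1 : s' < 1 := by rw [hs'def]; linarith
  have hs'0 : 0 < s' := by linarith
  -- a priori coefficient bound
  have hz' : (s' : ℂ) ∈ Metric.ball (0:ℂ) 1 := by
    rw [mem_ball_zero_iff, Complex.norm_real, Real.norm_of_nonneg hs'0.le]; exact hs'1
  have hsum' := (hf _ hz').summable
  have hterm : Tendsto (fun k : ℕ => ‖a k * (s' : ℂ) ^ (p * k + 1)‖) atTop (𝓝 0) := by
    simpa using hsum'.tendsto_atTop_zero.norm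
  obtain ⟨C, hC⟩ := hterm.bddAbove_range
  have hCk : ∀ k : ℕ, ‖a k‖ * s' ^ (p * k + 1) ≤ C := by
    intro k
    have := hC (Set.mem_range_self (f := fun k : ℕ => ‖a k * (s' : ℂ) ^ (p * k + 1)‖) k)
    simpa [norm_mul, norm_pow, Complex.norm_real, Real.norm_of_nonneg hs'0.le,
      abs_of_pos hs'0] using this
  -- majorant
  set q : ℝ := s / s' with hqdef
  have hq0 : 0 ≤ q := div_nonneg hs0.le hs'0.le
  have hq1 : q < 1 := (div_lt_one hs'0).2 hss'
  have hC0 : 0 ≤ C := le_trans (by positivity) (hCk 0)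
  set u : ℝ → ℕ → ℝ := fun _ k => C * q ^ (p * k + 1) with hudef
  have hu : Summable (u 0) := by
    have : Summable (fun k : ℕ => C * q * (q ^ p) ^ k) :=
      (summable_geometric_of_lt_one (by positivity) (pow_lt_one₀ hq0 hq1 hp.ne')).mul_left _
    refine this.congr fun k => ?_
    rw [hudef]
    simp only []
    rw [← pow_mul, mul_comm (p:ℕ) k]
    ring
  set c : ℕ → ℂ := fun k => a k * (s : ℂ) ^ (p * k + 1) with hcdef
  have hcnorm : ∀ k, ‖c k‖ = ‖a k‖ * s ^ (p * k + 1) := by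
    intro k
    rw [hcdef]
    simp [norm_mul, norm_pow, Complex.norm_real, Real.norm_of_nonneg hs0.le,
      abs_of_pos hs0]
  have hcle : ∀ k, ‖c k‖ ≤ u 0 k := by
    intro k
    rw [hcnorm k, hudef]
    have h2 : s' ^ (p * k + 1) * q ^ (p * k + 1) = s ^ (p * k + 1) := by
      rw [hqdef, ← mul_pow]
      congr 1
      field_simp
    have h1 : ‖a k‖ * s ^ (p * k + 1)
        = (‖a k‖ * s' ^ (p * k + 1)) * q ^ (p * k + 1) := by
      rw [mul_assoc, h2]
    rw [h1]
    exact mul_le_mul_of_nonneg_right (hCk k) (by positivity)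
  have hnormterm : ∀ (k : ℕ) (m : ℤ) (θ : AddCircle (1:ℝ)), ‖c k * fourier m θ‖ = ‖c k‖ := by
    intro k m θ
    rw [norm_mul]
    have h1 : ‖(fourier m θ : ℂ)‖ = 1 := Circle.norm_coe _
    rw [h1, mul_one]
  have hsummableF : ∀ θ : AddCircle (1:ℝ),
      Summable (fun k : ℕ => c k * fourier (((p*k+1 : ℕ) : ℤ)) θ) := by
    intro θ
    refine Summable.of_norm_bounded hu fun k => ?_
    rw [hnormterm]
    exact hcle k
  set G : AddCircle (1:ℝ) → ℂ := fun θ => ∑' k : ℕ, c k * fourier (((p*k+1 : ℕ) : ℤ)) θ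
    with hGdef
  have hGcont : Continuous G := by
    refine continuous_tsum (fun k => continuous_const.mul (fourier _).continuous) hu
      (fun k θ => ?_)
    rw [hnormterm]
    exact hcle k
  have hG1 : ∀ θ, ‖G θ‖ ≤ 1 := by
    intro θ
    obtain ⟨x, rfl⟩ := QuotientAddGroup.mk_surjective θ
    set z : ℂ := (s : ℂ) * Complex.exp (2 * Real.pi * Complex.I * x) with hzdef
    have hznorm : ‖z‖ = s := by
      rw [hzdef, norm_mul, Complex.norm_real, Real.norm_of_nonneg hs0.le]
      rw [Complex.norm_exp]
      simp
    have hz : z ∈ Metric.ball (0:ℂ) 1 := by rw [mem_ball_zero_iff, hznorm]; exact hs1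
    have hterm_eq : (fun k : ℕ => c k * fourier (((p*k+1 : ℕ) : ℤ)) (x : AddCircle (1:ℝ)))
        = fun k : ℕ => a k * z ^ (p * k + 1) := by
      funext k
      rw [fourier_coe_apply, hzdef, hcdef]
      rw [mul_pow, ← Complex.exp_nat_mul]
      rw [mul_assoc]
      congr 2
      push_cast
      ring
    have hx1 : HasSum (fun k : ℕ => a k * z ^ (p * k + 1)) (G (x : AddCircle (1:ℝ))) := by
      rw [← hterm_eq]
      exact (hsummableF _).hasSum
    have hfz : f z = G (x : AddCircle (1:ℝ)) := (hf z hz).unique hx1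
    rw [← hfz]
    exact hb z hz
  -- summability of norms of c
  have hcs : Summable fun k => ‖c k‖ := Summable.of_nonneg_of_le (fun k => norm_nonneg _) hcle hu
  -- orthonormality of fourier monomials as an integral identity
  have hfour : ∀ m j : ℤ, (∫ θ : AddCircle (1:ℝ), fourier (-m) θ * fourier j θ ∂haarAddCircle)
      = if m = j then 1 else 0 := by
    intro m j
    have h1 := (orthonormal_iff_ite (𝕜 := ℂ)).mp (orthonormal_fourier (T := 1)) m j
    rw [ContinuousMap.inner_toLp (𝕜 := ℂ) haarAddCircle (fourier m) (fourier j)] at h1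
    rw [← h1]
    refine integral_congr_ae (Filter.Eventually.of_forall fun θ => ?_)
    simp only [← fourier_neg]
    exact mul_comm _ _
  -- computation of the Fourier coefficients of G
  have hcoeff : ∀ n : ℕ, fourierCoeff G ((p*n+1 : ℕ) : ℤ) = c n := by
    intro n
    rw [fourierCoeff]
    have hrw : ∀ θ : AddCircle (1:ℝ),
        fourier (-((p*n+1 : ℕ) : ℤ)) θ • G θ
          = ∑' k : ℕ, fourier (-((p*n+1 : ℕ) : ℤ)) θ * (c k * fourier (((p*k+1 : ℕ) : ℤ)) θ) := by
      intro θ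
      rw [smul_eq_mul, hGdef]
      exact ((hsummableF θ).hasSum.mul_left _).tsum_eq.symm
    simp_rw [hrw]
    rw [MeasureTheory.integral_tsum (fun k => (Continuous.aestronglyMeasurable (by
        exact (fourier _).continuous.mul (continuous_const.mul (fourier _).continuous))))
      (by
        have hnn : ∀ k : ℕ, ∀ θ : AddCircle (1:ℝ),
            (‖fourier (-((p*n+1 : ℕ) : ℤ)) θ * (c k * fourier (((p*k+1 : ℕ) : ℤ)) θ)‖₊ : ℝ≥0∞)
              = (‖c k‖₊ : ℝ≥0∞) := by
          intro k θ
          have : ‖fourier (-((p*n+1 : ℕ) : ℤ)) θ * (c k * fourier (((p*k+1 : ℕ) : ℤ)) θ)‖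
              = ‖c k‖ := by
            rw [norm_mul, hnormterm]
            have h1 : ‖(fourier (-((p*n+1 : ℕ) : ℤ)) θ : ℂ)‖ = 1 := Circle.norm_coe _
            rw [h1, one_mul]
          rw [ENNReal.coe_inj]
          ext
          exact this
        simp_rw [enorm_eq_nnnorm, MeasureTheory.lintegral_congr (fun θ => hnn _ θ), lintegral_const,
          measure_univ, mul_one]
        exact ENNReal.tsum_coe_ne_top_iff_summable.mpr (by
          have : (fun k => ‖c k‖₊) = fun k => (⟨‖c k‖, norm_nonneg _⟩ : NNReal) := rfl
          rw [← NNReal.summable_coe]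
          exact hcs))]
    have hterm2 : ∀ k : ℕ, (∫ θ : AddCircle (1:ℝ),
        fourier (-((p*n+1:ℕ):ℤ)) θ * (c k * fourier (((p*k+1:ℕ):ℤ)) θ) ∂haarAddCircle)
        = c k * (if ((p*n+1:ℕ):ℤ) = ((p*k+1:ℕ):ℤ) then 1 else 0) := by
      intro k
      rw [← hfour]
      rw [← integral_const_mul]
      congr 1
      funext θ
      ring
    simp_rw [hterm2]
    rw [tsum_eq_single n]
    · simp
    · intro k hk
      rw [if_neg, mul_zero]
      intro h
      apply hk
      have h2 : p * n + 1 = p * k + 1 := by exact_mod_cast h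
      exact (Nat.eq_of_mul_eq_mul_left hp (by omega)).symm
  -- Parseval
  set Gc : C(AddCircle (1:ℝ), ℂ) := ⟨G, hGcont⟩ with hGc
  set gE := ContinuousMap.toLp (E := ℂ) 2 haarAddCircle ℂ Gc with hGL
  have hcoe : ∀ i : ℤ, fourierCoeff (gE : AddCircle (1:ℝ) → ℂ) i = fourierCoeff G i :=
    fun i => fourierCoeff_toLp Gc i
  have hpar := tsum_sq_fourierCoeff gE
  have hint : (∫ θ : AddCircle (1:ℝ), ‖(gE : AddCircle (1:ℝ) → ℂ) θ‖^2 ∂haarAddCircle) ≤ 1 := by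
    have hae : (gE : AddCircle (1:ℝ) → ℂ) =ᵐ[haarAddCircle] G :=
      ContinuousMap.coeFn_toLp (p := 2) (𝕜 := ℂ) haarAddCircle Gc
    have heq : (∫ θ : AddCircle (1:ℝ), ‖(gE : AddCircle (1:ℝ) → ℂ) θ‖^2 ∂haarAddCircle)
        = ∫ θ : AddCircle (1:ℝ), ‖G θ‖^2 ∂haarAddCircle :=
      integral_congr_ae (hae.mono fun θ h => by simp only [h])
    rw [heq]
    have hi : Integrable (fun θ : AddCircle (1:ℝ) => ‖G θ‖^2) haarAddCircle := by
      refine ⟨(hGcont.norm.pow 2).aestronglyMeasurable, ?_⟩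
      refine MeasureTheory.HasFiniteIntegral.of_bounded (C := 1)
        (Filter.Eventually.of_forall fun θ => ?_)
      rw [Real.norm_of_nonneg (by positivity)]
      nlinarith [hG1 θ, norm_nonneg (G θ)]
    calc (∫ θ : AddCircle (1:ℝ), ‖G θ‖^2 ∂haarAddCircle)
        ≤ ∫ _ : AddCircle (1:ℝ), (1:ℝ) ∂haarAddCircle :=
          integral_mono hi (integrable_const 1) (fun θ => by nlinarith [hG1 θ, norm_nonneg (G θ)])
      _ = 1 := by simp
  have hsummZ : Summable (fun i : ℤ => ‖fourierCoeff (gE : AddCircle (1:ℝ) → ℂ) i‖^2) := by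
    have h := lp.memℓp (fourierBasis.repr gE)
    rw [memℓp_gen_iff (by norm_num)] at h
    refine (summable_congr fun i => ?_).mp h
    rw [fourierBasis_repr]
    rw [show ((2:ℝ≥0∞).toReal) = ((2:ℕ):ℝ) by norm_num, Real.rpow_natCast]
  have hsum_le : ∑ k ∈ Finset.range N, (‖a k‖ * s ^ (p*k+1))^2
      ≤ ∑' i : ℤ, ‖fourierCoeff (gE : AddCircle (1:ℝ) → ℂ) i‖^2 := by
    have himg := Finset.sum_image (s := Finset.range N)
      (g := fun k : ℕ => ((p*k+1 : ℕ) : ℤ))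
      (f := fun i : ℤ => ‖fourierCoeff (gE : AddCircle (1:ℝ) → ℂ) i‖^2)
      (fun x _ y _ h => by
        simp only at h
        have h2 : p * x + 1 = p * y + 1 := by exact_mod_cast h
        exact Nat.eq_of_mul_eq_mul_left hp (by omega))
    calc ∑ k ∈ Finset.range N, (‖a k‖ * s ^ (p*k+1))^2
        = ∑ k ∈ Finset.range N, ‖fourierCoeff (gE : AddCircle (1:ℝ) → ℂ) (((p*k+1:ℕ)):ℤ)‖^2 := by
          refine Finset.sum_congr rfl fun k _ => ?_
          rw [hcoe, hcoeff k, hcnorm k]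
      _ = ∑ i ∈ (Finset.range N).image (fun k : ℕ => ((p*k+1 : ℕ) : ℤ)),
            ‖fourierCoeff (gE : AddCircle (1:ℝ) → ℂ) i‖^2 := himg.symm
      _ ≤ ∑' i : ℤ, ‖fourierCoeff (gE : AddCircle (1:ℝ) → ℂ) i‖^2 :=
          Summable.sum_le_tsum _ (fun i _ => sq_nonneg _) hsummZ
  calc ∑ k ∈ Finset.range N, (‖a k‖ * s ^ (p*k+1))^2
      ≤ ∑' i : ℤ, ‖fourierCoeff (gE : AddCircle (1:ℝ) → ℂ) i‖^2 := hsum_le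
    _ = ∫ θ : AddCircle (1:ℝ), ‖(gE : AddCircle (1:ℝ) → ℂ) θ‖^2 ∂haarAddCircle := hpar
    _ ≤ 1 := hint

lemma aux_coeff (p : ℕ) (hp : 0 < p) (f : ℂ → ℂ) (a : ℕ → ℂ)
    (hf : ∀ z ∈ Metric.ball (0 : ℂ) 1, HasSum (fun k : ℕ => a k * z ^ (p * k + 1)) (f z))
    (hb : ∀ z ∈ Metric.ball (0 : ℂ) 1, ‖f z‖ ≤ 1) :
    Summable (fun k : ℕ => ‖a k‖ ^ 2) ∧ ∑' k : ℕ, ‖a k‖ ^ 2 ≤ 1 := by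
  have hN : ∀ N : ℕ, ∑ k ∈ Finset.range N, ‖a k‖ ^ 2 ≤ 1 := by
    intro N
    have hcont : Continuous fun s : ℝ => ∑ k ∈ Finset.range N, (‖a k‖ * s ^ (p*k+1)) ^ 2 := by
      refine continuous_finset_sum _ fun k _ => ?_
      fun_prop
    have htend : Tendsto (fun s : ℝ => ∑ k ∈ Finset.range N, (‖a k‖ * s ^ (p*k+1)) ^ 2)
        (𝓝[<] (1:ℝ)) (𝓝 (∑ k ∈ Finset.range N, ‖a k‖ ^ 2)) := by
      have h2 := (hcont.tendsto 1).mono_left (nhdsWithin_le_nhds (s := Set.Iio (1:ℝ)))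
      simpa using h2
    refine le_of_tendsto htend ?_
    filter_upwards [Ioo_mem_nhdsLT_of_mem
      (show (1:ℝ) ∈ Set.Ioc (0:ℝ) 1 from ⟨one_pos, le_refl 1⟩)] with s hs
    exact aux_parseval p hp f a hf hb s hs.1 hs.2 N
  have hsm : Summable fun k : ℕ => ‖a k‖ ^ 2 := summable_of_sum_range_le (fun n => sq_nonneg _) hN
  exact ⟨hsm, Real.tsum_le_of_sum_range_le (fun n => sq_nonneg _) hN⟩


set_option maxHeartbeats 1000000 in
/-- Case `a < r_p^p` of the proof of the Bohr inequality for `p`-symmetric functions: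
if `f(z) = ∑_{k≥0} a_{pk+1} z^{pk+1}` with `|f| ≤ 1` on 𝔻, `a = |a_1| < r_p^p`, where
`r_p` is the maximal root in `(0,1)` of `8 r^{2p} + r^{2(p-1)} - 6 r^{p-1} + 1 = 0`, then
`∑_{k≥0} |a_{pk+1}| r_p^{pk+1} ≤ r_p (a + r_p^p √(1-a²)/√(1-r_p^{2p})) ≤ 2 r_p^{p+1} ≤ 1`. -/
theorem majorant_bound_case_two (p : ℕ) (hp : 0 < p)
    (rp : ℝ) (hrp : rp ∈ Set.Ioo (0 : ℝ) 1)
    (hroot : 8 * rp ^ (2 * p) + rp ^ (2 * (p - 1)) - 6 * rp ^ (p - 1) + 1 = 0)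
    (hmax : ∀ s ∈ Set.Ioo (0 : ℝ) 1,
      8 * s ^ (2 * p) + s ^ (2 * (p - 1)) - 6 * s ^ (p - 1) + 1 = 0 → s ≤ rp)
    (f : ℂ → ℂ) (a : ℕ → ℂ)
    (hf : ∀ z ∈ Metric.ball (0 : ℂ) 1, HasSum (fun k : ℕ => a k * z ^ (p * k + 1)) (f z))
    (hb : ∀ z ∈ Metric.ball (0 : ℂ) 1, ‖f z‖ ≤ 1)
    (hlt : ‖a 0‖ < rp ^ p) :
    ∑' k : ℕ, ‖a k‖ * rp ^ (p * k + 1) ≤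
        rp * (‖a 0‖ + rp ^ p * Real.sqrt (1 - ‖a 0‖ ^ 2) / Real.sqrt (1 - rp ^ (2 * p))) ∧
    rp * (‖a 0‖ + rp ^ p * Real.sqrt (1 - ‖a 0‖ ^ 2) / Real.sqrt (1 - rp ^ (2 * p))) ≤
        2 * rp ^ (p + 1) ∧
    2 * rp ^ (p + 1) ≤ 1 := by
  obtain ⟨hrp0, hrp1⟩ := hrp
  obtain ⟨hsq, htsq⟩ := aux_coeff p hp f a hf hb
  set A := ‖a 0‖ with hA
  have hA0 : 0 ≤ A := norm_nonneg _
  set b := rp ^ p with hbdef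
  have hb0 : 0 < b := pow_pos hrp0 p
  have hb1 : b < 1 := pow_lt_one₀ hrp0.le hrp1 hp.ne'
  have h2p : rp ^ (2*p) = b ^ 2 := by rw [hbdef, ← pow_mul, mul_comm]
  have hb2lt : b^2 < 1 := by nlinarith
  set t := rp ^ (p-1) with htdef
  have ht0 : 0 < t := pow_pos hrp0 _
  have ht1 : t ≤ 1 := pow_le_one₀ hrp0.le hrp1.le
  have ht2 : rp ^ (2*(p-1)) = t^2 := by rw [htdef, ← pow_mul, mul_comm]
  have hrooteq : 8 * b^2 + t^2 - 6*t + 1 = 0 := by rw [← h2p, ← ht2]; exact hroot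
  have hb2 : b^2 ≤ 1/2 := by
    nlinarith [mul_nonneg (sub_nonneg.2 ht1) (show (0:ℝ) ≤ 5 - t by linarith)]
  have hthird : 2 * rp ^ (p+1) ≤ 1 := by
    have htu : t * rp ^ (p+1) = rp ^ (2*p) := by rw [htdef, ← pow_add]; congr 1; omega
    have hu0 : 0 < rp ^ (p+1) := pow_pos hrp0 _
    nlinarith [sq_nonneg (t-1), mul_pos ht0 hu0]
  have h1b2 : (0:ℝ) < 1 - b^2 := by linarith
  have hvpos : 0 < Real.sqrt (1 - rp ^ (2*p)) := Real.sqrt_pos.2 (by rw [h2p]; linarith)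
  set v := Real.sqrt (1 - rp ^ (2*p)) with hvdef
  have hv2 : v^2 = 1 - b^2 := by rw [hvdef, h2p]; exact Real.sq_sqrt (by linarith)
  have hAb : A < b := hlt
  have hA1 : A < 1 := hAb.trans hb1
  set w := Real.sqrt (1 - A^2) with hwdef
  have hw0 : 0 ≤ w := Real.sqrt_nonneg _
  have hw2 : w^2 = 1 - A^2 := Real.sq_sqrt (by nlinarith)
  have hak1 : ∀ k, ‖a k‖ ≤ 1 := by
    intro k
    have h1 : ‖a k‖^2 ≤ 1 := le_trans (Summable.le_tsum hsq k fun j _ => sq_nonneg _) htsq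
    nlinarith [norm_nonneg (a k)]
  have hpowk : ∀ k : ℕ, rp ^ (p*k+1) = b^k * rp := fun k => by
    rw [pow_succ, hbdef, ← pow_mul]
  have hSsum : Summable (fun k : ℕ => ‖a k‖ * rp ^ (p*k+1)) := by
    refine Summable.of_nonneg_of_le (fun k => by positivity) (fun k => ?_)
      ((summable_geometric_of_lt_one hb0.le hb1).mul_right rp)
    rw [hpowk k]
    calc ‖a k‖ * (b^k * rp) ≤ 1 * (b^k * rp) :=
          mul_le_mul_of_nonneg_right (hak1 k) (by positivity)
      _ = b^k * rp := one_mul _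
  -- tail bound
  have htail : ∑' k : ℕ, ‖a (k+1)‖ * rp ^ (p*(k+1)+1) ≤ rp * (b * w / v) := by
    refine Real.tsum_le_of_sum_range_le (fun n => by positivity) fun N => ?_
    have hCS := Finset.sum_mul_sq_le_sq_mul_sq (Finset.range N)
      (fun k => ‖a (k+1)‖) (fun k => rp^(p*(k+1)))
    have hu2 : ∑ k ∈ Finset.range N, ‖a (k+1)‖^2 ≤ 1 - A^2 := by
      have h1 : ∑ k ∈ Finset.range (N+1), ‖a k‖^2 ≤ 1 :=
        le_trans (Summable.sum_le_tsum _ (fun _ _ => sq_nonneg _) hsq) htsq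
      have h2 := Finset.sum_range_succ' (fun k => ‖a k‖^2) N
      rw [h2] at h1
      simp only [hA]
      linarith
    have hv2sum : ∑ k ∈ Finset.range N, (rp^(p*(k+1)))^2 ≤ b^2/(1-b^2) := by
      have hterm : ∀ k : ℕ, (rp^(p*(k+1)))^2 = b^2 * (b^2)^k := by
        intro k
        rw [hbdef, ← pow_mul, ← pow_mul, ← pow_mul, ← pow_add]
        congr 1
        ring
      simp_rw [hterm]
      rw [← Finset.mul_sum]
      have hgeo : ∑ k ∈ Finset.range N, (b^2)^k ≤ (1-b^2)⁻¹ := by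
        refine le_trans (Summable.sum_le_tsum _ (fun _ _ => by positivity)
          (summable_geometric_of_lt_one (by positivity) hb2lt)) ?_
        · rw [tsum_geometric_of_lt_one (by positivity) hb2lt]
      calc b^2 * ∑ k ∈ Finset.range N, (b^2)^k ≤ b^2 * (1-b^2)⁻¹ :=
            mul_le_mul_of_nonneg_left hgeo (by positivity)
        _ = b^2/(1-b^2) := by rw [div_eq_mul_inv]
    have hQ2 : (b * w / v)^2 = (1-A^2) * (b^2/(1-b^2)) := by
      rw [div_pow, mul_pow, hw2, hv2]
      ring
    have hprod_le : (∑ k ∈ Finset.range N, ‖a (k+1)‖^2) *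
        (∑ k ∈ Finset.range N, (rp^(p*(k+1)))^2) ≤ (1-A^2) * (b^2/(1-b^2)) := by
      refine mul_le_mul hu2 hv2sum ?_ (by nlinarith [hA0, hA1])
      exact Finset.sum_nonneg fun k _ => sq_nonneg _
    have hkey : (∑ k ∈ Finset.range N, ‖a (k+1)‖ * rp^(p*(k+1)))^2 ≤ (b * w / v)^2 := by
      rw [hQ2]
      exact le_trans hCS hprod_le
    have hfin : ∑ k ∈ Finset.range N, ‖a (k+1)‖ * rp^(p*(k+1)) ≤ b * w / v := by
      have h1 : 0 ≤ ∑ k ∈ Finset.range N, ‖a (k+1)‖ * rp^(p*(k+1)) :=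
        Finset.sum_nonneg fun k _ => by positivity
      calc ∑ k ∈ Finset.range N, ‖a (k+1)‖ * rp^(p*(k+1))
          = Real.sqrt ((∑ k ∈ Finset.range N, ‖a (k+1)‖ * rp^(p*(k+1)))^2) :=
            (Real.sqrt_sq h1).symm
        _ ≤ Real.sqrt ((b * w / v)^2) := Real.sqrt_le_sqrt hkey
        _ = b * w / v := Real.sqrt_sq (by positivity)
    calc ∑ k ∈ Finset.range N, ‖a (k+1)‖ * rp^(p*(k+1)+1)
        = rp * ∑ k ∈ Finset.range N, ‖a (k+1)‖ * rp^(p*(k+1)) := by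
          rw [Finset.mul_sum]
          refine Finset.sum_congr rfl fun k _ => ?_
          rw [pow_succ]
          ring
      _ ≤ rp * (b * w / v) := mul_le_mul_of_nonneg_left hfin hrp0.le
  refine ⟨?_, ?_, hthird⟩
  · rw [Summable.tsum_eq_zero_add hSsum]
    have h0 : ‖a 0‖ * rp ^ (p*0+1) = A * rp := by
      rw [← hA]
      norm_num
    rw [h0]
    calc A * rp + ∑' k : ℕ, ‖a (k+1)‖ * rp ^ (p*(k+1)+1)
        ≤ A * rp + rp * (b * w / v) := by linarith [htail]
      _ = rp * (A + b * w / v) := by ring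
  · have hkey2 : A + b * w / v ≤ 2 * b := by
      have h2bA : 0 ≤ 2*b - A := by linarith
      have hprod : 0 ≤ (b - A) * (3*b - A - 4*b^3) := by
        refine mul_nonneg (by linarith) ?_
        nlinarith [mul_nonneg hb0.le (show (0:ℝ) ≤ 1 - 2*b^2 by linarith)]
      have hsq : (b*w)^2 ≤ ((2*b-A)*v)^2 := by
        have e1 : (b*w)^2 = b^2*(1-A^2) := by rw [mul_pow, hw2]
        have e2 : ((2*b-A)*v)^2 = (2*b-A)^2*(1-b^2) := by rw [mul_pow, hv2]
        rw [e1, e2]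
        nlinarith [hprod]
      have hle : b*w ≤ (2*b-A)*v := by
        calc b*w = Real.sqrt ((b*w)^2) := (Real.sqrt_sq (by positivity)).symm
          _ ≤ Real.sqrt (((2*b-A)*v)^2) := Real.sqrt_le_sqrt hsq
          _ = (2*b-A)*v := Real.sqrt_sq (by positivity)
      have : b * w / v ≤ 2*b - A := by
        rw [div_le_iff₀ hvpos]
        exact hle
      linarith
    have hps : rp ^ (p+1) = b * rp := by rw [pow_succ, hbdef]
    rw [hps]
    calc rp * (A + b * w / v) ≤ rp * (2*b) :=
          mul_le_mul_of_nonneg_left hkey2 hrp0.le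
      _ = 2 * (b * rp) := by ring
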